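/- Let (Ω, ℱ, ℙ) be a probability space, (ℱ_t)_{t∈ℕ} a filtration (ℱ_s ⊆ ℱ_t ⊆ ℱ whenever s ≤ t), Z : Ω → ℝ measurable with 0 ≤ Z ≤ 1, and T ≥ 1 a natural number. Define the random variables X = Σ_{t=0}^{T−1} Z = T·Z and Y = Σ_{t=0}^{T−1} E[Z | ℱ_t]. Then E[X] = E[Y] and Var(X) ≥ Var(Y). -/

import Mathlib

open MeasureTheory ProbabilityTheory Finset

private lemma condExp_sub_mean_sq_le {Ω : Type*} {m0 : MeasurableSpace Ω} {μ : Measure Ω}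
    [IsProbabilityMeasure μ] {m : MeasurableSpace Ω} (hm : m ≤ m0)
    {Z : Ω → ℝ} (hZ : Measurable[m0] Z) (hZb : ∀ ω, |Z ω| ≤ 1) :
    ∫ ω, ((μ[Z|m]) ω - ∫ ω, Z ω ∂μ) ^ 2 ∂μ ≤ variance Z μ := by
  set c : ℝ := ∫ ω, Z ω ∂μ with hc
  have hZb' : ∀ᵐ ω ∂μ, ‖Z ω‖ ≤ 1 := ae_of_all _ fun ω => by
    simpa [Real.norm_eq_abs] using hZb ω
  have hZsm : AEStronglyMeasurable[m0] Z μ := hZ.aestronglyMeasurable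
  have hZ2 : MemLp Z 2 μ := MemLp.of_bound hZsm 1 hZb'
  have hZint : Integrable Z μ := hZ2.integrable one_le_two
  set W : Ω → ℝ := μ[Z|m] with hW
  have hWsm : AEStronglyMeasurable[m0] W μ :=
    (stronglyMeasurable_condExp.mono hm).aestronglyMeasurable
  have hWb : ∀ᵐ ω ∂μ, ‖W ω‖ ≤ 1 := by
    have h := ae_bdd_condExp_of_ae_bdd (m := m) (m0 := m0) (μ := μ) (R := 1) (f := Z)
      (ae_of_all μ fun ω => by simpa using hZb ω)
    filter_upwards [h] with ω hω
    simpa [Real.norm_eq_abs] using hω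
  have hW2 : MemLp W 2 μ := MemLp.of_bound hWsm 1 hWb
  have hWZ_int : Integrable (W * Z) μ := hZint.bdd_mul hWsm hWb
  have hWZ_int' : Integrable (fun ω => W ω * Z ω) μ := hWZ_int
  have hWW_int : Integrable (fun ω => W ω * W ω) μ :=
    integrable_condExp.bdd_mul hWsm hWb
  have hZZ_int : Integrable (fun ω => Z ω * Z ω) μ := hZint.bdd_mul hZsm hZb'
  -- key orthogonality: ∫ W·Z = ∫ W·W
  have hpull : μ[W * Z|m] =ᵐ[μ] W * μ[Z|m] :=
    condExp_stronglyMeasurable_mul_of_bound hm stronglyMeasurable_condExp hZint 1 hWb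
  have key : ∫ ω, W ω * Z ω ∂μ = ∫ ω, W ω * W ω ∂μ := by
    have h1 : ∫ ω, (μ[W * Z|m]) ω ∂μ = ∫ ω, (W * Z) ω ∂μ := integral_condExp hm
    have h2 : ∫ ω, (μ[W * Z|m]) ω ∂μ = ∫ ω, (W * μ[Z|m]) ω ∂μ := integral_congr_ae hpull
    calc ∫ ω, W ω * Z ω ∂μ = ∫ ω, (W * Z) ω ∂μ := rfl
      _ = ∫ ω, (W * μ[Z|m]) ω ∂μ := by rw [← h1, h2]
      _ = ∫ ω, W ω * W ω ∂μ := rfl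
  -- ∫ W·W ≤ ∫ Z·Z
  have hWW_le : ∫ ω, W ω * W ω ∂μ ≤ ∫ ω, Z ω * Z ω ∂μ := by
    have h0 : 0 ≤ ∫ ω, (Z ω - W ω) ^ 2 ∂μ := integral_nonneg fun ω => sq_nonneg _
    have hexp : ∫ ω, (Z ω - W ω) ^ 2 ∂μ
        = ∫ ω, Z ω * Z ω ∂μ - 2 * ∫ ω, W ω * Z ω ∂μ + ∫ ω, W ω * W ω ∂μ := by
      have : (fun ω => (Z ω - W ω) ^ 2)
          = fun ω => Z ω * Z ω - 2 * (W ω * Z ω) + W ω * W ω := by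
        funext ω; ring
      have h2WZ : Integrable (fun ω => 2 * (W ω * Z ω)) μ := hWZ_int'.const_mul 2
      have hA : Integrable (fun ω => Z ω * Z ω - 2 * (W ω * Z ω)) μ := hZZ_int.sub h2WZ
      rw [this, integral_add hA hWW_int, integral_sub hZZ_int h2WZ, integral_const_mul]
    rw [hexp, key] at h0
    linarith
  -- means
  have hWmean : ∫ ω, W ω ∂μ = c := integral_condExp hm
  have hvar : variance Z μ = ∫ ω, Z ω * Z ω ∂μ - c ^ 2 := by
    rw [variance_eq_sub hZ2]
    congr 1
    · refine integral_congr_ae (ae_of_all _ fun ω => ?_)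
      simp [sq]
  have hleft : ∫ ω, (W ω - c) ^ 2 ∂μ = ∫ ω, W ω * W ω ∂μ - c ^ 2 := by
    have : (fun ω => (W ω - c) ^ 2)
        = fun ω => W ω * W ω - 2 * c * W ω + c ^ 2 := by
      funext ω; ring
    have hcW : Integrable (fun ω => 2 * c * W ω) μ := integrable_condExp.const_mul (2 * c)
    have hB : Integrable (fun ω => W ω * W ω - 2 * c * W ω) μ := hWW_int.sub hcW
    rw [this, integral_add hB (integrable_const _),
      integral_sub hWW_int hcW, integral_const_mul, hWmean, integral_const]
    simp only [measure_univ, probReal_univ, ENNReal.toReal_one, smul_eq_mul, one_mul]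
    ring
  rw [hleft, hvar]
  linarith

/-- variance reduction, Theorem 3: for a `[0,1]`-valued random
variable `Z`, a filtration `(ℱ t)` and `X = ∑_{t<T} Z = T·Z`,
`Y = ∑_{t<T} E[Z | ℱ t]`, one has `E[X] = E[Y]` and `Var(X) ≥ Var(Y)`. -/
theorem stmt_7 {Ω : Type*} {m0 : MeasurableSpace Ω} (μ : Measure Ω) [IsProbabilityMeasure μ]
    (ℱ : Filtration ℕ m0) (Z : Ω → ℝ) (hZ : Measurable Z)
    (hZ0 : ∀ ω, 0 ≤ Z ω) (hZ1 : ∀ ω, Z ω ≤ 1)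
    (T : ℕ) (hT : 1 ≤ T)
    (X Y : Ω → ℝ)
    (hX : ∀ ω, X ω = ∑ t ∈ Finset.range T, Z ω)
    (hY : ∀ ω, Y ω = ∑ t ∈ Finset.range T, (μ[Z | ℱ t]) ω) :
    ∫ ω, X ω ∂μ = ∫ ω, Y ω ∂μ ∧ variance Y μ ≤ variance X μ := by
  set m : ℝ := ∫ ω, Z ω ∂μ with hm
  have hZb : ∀ ω, |Z ω| ≤ 1 := fun ω => abs_le.2 ⟨by linarith [hZ0 ω], hZ1 ω⟩
  have hZb' : ∀ᵐ ω ∂μ, ‖Z ω‖ ≤ 1 := ae_of_all _ fun ω => by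
    simpa [Real.norm_eq_abs] using hZb ω
  have hZ2 : MemLp Z 2 μ := MemLp.of_bound hZ.aestronglyMeasurable 1 hZb'
  have hZint : Integrable Z μ := hZ2.integrable one_le_two
  have hXeq : X = fun ω => (T : ℝ) * Z ω := by
    funext ω; rw [hX ω]; simp [Finset.sum_const, mul_comm]
  have hYeq : Y = fun ω => ∑ t ∈ Finset.range T, (μ[Z | ℱ t]) ω := funext hY
  -- each conditional expectation
  have hYtmean : ∀ t, ∫ ω, (μ[Z | ℱ t]) ω ∂μ = m := fun t => integral_condExp (ℱ.le t)
  have hYtb : ∀ t, ∀ᵐ ω ∂μ, ‖(μ[Z | ℱ t]) ω‖ ≤ 1 := by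
    intro t
    have h := ae_bdd_condExp_of_ae_bdd (m := ℱ t) (m0 := m0) (μ := μ) (R := 1) (f := Z)
      (ae_of_all μ fun ω => by simpa using hZb ω)
    filter_upwards [h] with ω hω
    simpa [Real.norm_eq_abs] using hω
  have hYt2 : ∀ t, MemLp (μ[Z | ℱ t]) 2 μ := fun t =>
    MemLp.of_bound (stronglyMeasurable_condExp.mono (ℱ.le t)).aestronglyMeasurable 1 (hYtb t)
  -- expectations agree
  have hEX : ∫ ω, X ω ∂μ = (T : ℝ) * m := by
    rw [hXeq, integral_const_mul]
  have hEY : ∫ ω, Y ω ∂μ = (T : ℝ) * m := by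
    rw [hYeq, integral_finset_sum _ fun t _ => integrable_condExp]
    simp [hYtmean, Finset.sum_const, mul_comm]
  refine ⟨by rw [hEX, hEY], ?_⟩
  -- variance of X
  have hVX : variance X μ = (T : ℝ) ^ 2 * variance Z μ := by
    rw [hXeq, variance_const_mul]
  -- Y ∈ L²
  have hY2 : MemLp Y 2 μ := by
    rw [hYeq]
    have h := memLp_finset_sum' (Finset.range T) fun t (_ : t ∈ Finset.range T) => hYt2 t
    convert h using 1
    funext ω
    simp
  -- variance of Y as an integral
  have hVY : variance Y μ = ∫ ω, (Y ω - (T : ℝ) * m) ^ 2 ∂μ := by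
    rw [variance_eq_integral hY2.aemeasurable, hEY]
  -- pointwise Cauchy–Schwarz bound
  have hpt : ∀ ω, (Y ω - (T : ℝ) * m) ^ 2
      ≤ (T : ℝ) * ∑ t ∈ Finset.range T, ((μ[Z | ℱ t]) ω - m) ^ 2 := by
    intro ω
    have h1 : Y ω - (T : ℝ) * m = ∑ t ∈ Finset.range T, ((μ[Z | ℱ t]) ω - m) := by
      rw [hY ω, Finset.sum_sub_distrib]
      simp [Finset.sum_const]
    rw [h1]
    have := sq_sum_le_card_mul_sum_sq (s := Finset.range T)
      (f := fun t => (μ[Z | ℱ t]) ω - m)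
    simpa [Finset.card_range] using this
  -- integrability of both sides
  have hint1 : Integrable (fun ω => (Y ω - (T : ℝ) * m) ^ 2) μ := by
    have := (hY2.sub (memLp_const ((T : ℝ) * m))).integrable_sq
    simpa [sq] using this
  have hint2 : ∀ t, Integrable (fun ω => ((μ[Z | ℱ t]) ω - m) ^ 2) μ := by
    intro t
    have := ((hYt2 t).sub (memLp_const m)).integrable_sq
    simpa [sq] using this
  have hint3 : Integrable
      (fun ω => (T : ℝ) * ∑ t ∈ Finset.range T, ((μ[Z | ℱ t]) ω - m) ^ 2) μ :=
    (integrable_finset_sum _ fun t _ => hint2 t).const_mul _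
  -- each term bound
  have hterm : ∀ t, ∫ ω, ((μ[Z | ℱ t]) ω - m) ^ 2 ∂μ ≤ variance Z μ := fun t =>
    condExp_sub_mean_sq_le (ℱ.le t) hZ hZb
  calc variance Y μ = ∫ ω, (Y ω - (T : ℝ) * m) ^ 2 ∂μ := hVY
    _ ≤ ∫ ω, (T : ℝ) * ∑ t ∈ Finset.range T, ((μ[Z | ℱ t]) ω - m) ^ 2 ∂μ :=
        integral_mono hint1 hint3 hpt
    _ = (T : ℝ) * ∑ t ∈ Finset.range T, ∫ ω, ((μ[Z | ℱ t]) ω - m) ^ 2 ∂μ := by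
        rw [integral_const_mul, integral_finset_sum _ fun t _ => hint2 t]
    _ ≤ (T : ℝ) * ∑ t ∈ Finset.range T, variance Z μ := by
        refine mul_le_mul_of_nonneg_left (Finset.sum_le_sum fun t _ => hterm t)
          (by positivity)
    _ = (T : ℝ) ^ 2 * variance Z μ := by
        rw [Finset.sum_const, Finset.card_range]
        push_cast
        ring
    _ = variance X μ := hVX.symm
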